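/- For any diagram δ ⊂ Z×Z of size n and any 1 < i < n, the map D_i^δ : S_n → S_n is an involution. -/

import Mathlib

open scoped Classical

/-- Swap the values `a` and `b` in a word. -/
def swapVals (a b : ℕ) (w : List ℕ) : List ℕ :=
  w.map fun x => if x = a then b else if x = b then a else x

/-- Elementary dual equivalence `d_i`: acts as the identity if `i` lies (positionally)
between `i-1` and `i+1`, and otherwise swaps `i` with the outermost of `i-1`, `i+1`. -/
def delem (i : ℕ) (w : List ℕ) : List ℕ :=
  let p := w.idxOf (i - 1)
  let q := w.idxOf i
  let r := w.idxOf (i + 1)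
  if (p < q ∧ q < r) ∨ (r < q ∧ q < p) then w
  else if (q < p ∧ p < r) ∨ (r < p ∧ p < q) then swapVals i (i + 1) w
  else swapVals i (i - 1) w

/-- The cyclic replacement `a ↦ b ↦ c ↦ a` on the letters of a word. -/
def cycVals (a b c : ℕ) (w : List ℕ) : List ℕ :=
  w.map fun x => if x = a then b else if x = b then c else if x = c then a else x

/-- The map `d̃_i`: identity if `i` lies between `i-1` and `i+1`, otherwise it cyclically
permutes the values `i-1, i, i+1` as in Assaf's construction. -/
def dtil (i : ℕ) (w : List ℕ) : List ℕ :=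
  let p := w.idxOf (i - 1)
  let q := w.idxOf i
  let r := w.idxOf (i + 1)
  if (p < q ∧ q < r) ∨ (r < q ∧ q < p) then w
  else if q < p ∧ q < r then
    (if p < r then cycVals i (i - 1) (i + 1) w else cycVals i (i + 1) (i - 1) w)
  else
    (if p < r then cycVals (i - 1) i (i + 1) w else cycVals (i + 1) i (i - 1) w)

/-- The standardization of a word: rank letters by value, ties broken left to right. -/
def stWord (w : List ℕ) : List ℕ :=
  (w.zipIdx.map Prod.swap).map fun p =>
    1 + ((w.zipIdx.map Prod.swap).filter fun q => q.2 < p.2 ∨ (q.2 = p.2 ∧ q.1 < p.1)).length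

/-- Unstandardization of a permutation: the value `i` is replaced by
`1 +` the number of `j < i` such that `j+1` occurs before `j`. -/
def unstPerm (π : List ℕ) : List ℕ :=
  π.map fun i =>
    1 + ((List.range (i - 1)).filter fun j => π.idxOf (j + 2) < π.idxOf (j + 1)).length

/-- Unstandardization of a word. -/
def unstWord (w : List ℕ) : List ℕ := unstPerm (stWord w)

/-- RSK row insertion of a value into a tableau (rows listed bottom row first). -/
def insertTab : List (List ℕ) → ℕ → List (List ℕ)
  | [], x => [[x]]
  | r :: rs, x =>
    match r.findIdx? (fun y => x < y) with
    | none => (r ++ [x]) :: rs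
    | some j => r.set j x :: insertTab rs (r.getD j 0)

/-- The RSK insertion tableau of a word. -/
def Ptab (w : List ℕ) : List (List ℕ) := w.foldl insertTab []

def UtabAux : ℕ → List ℕ → List (List ℕ)
  | _, [] => []
  | s, a :: rest => ((List.range a).map (· + s + 1)) :: UtabAux (s + a) rest

/-- The superstandard tableau `U_λ`: `1,…,n` filled along the rows of `λ`, bottom row first. -/
def Utab (lam : List ℕ) : List (List ℕ) := (UtabAux 0 lam).filter (· ≠ [])

/-- `w` is a Yamanouchi word of content `lam`. -/
def IsYam (lam : List ℕ) (w : List ℕ) : Prop :=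
  (∀ x ∈ w, 1 ≤ x) ∧
  (∀ i : ℕ, w.count (i + 1) = lam.getD i 0) ∧
  ∀ t : List ℕ, t <:+ w → ∀ i : ℕ, t.count (i + 2) ≤ t.count (i + 1)

/-- `lam` is a partition: weakly decreasing with positive parts. -/
def IsPartition (lam : List ℕ) : Prop :=
  lam.Pairwise (· ≥ ·) ∧ ∀ a ∈ lam, 0 < a

/-- Row reading word of a tableau (rows listed bottom first; read top row first). -/
def rwTab (T : List (List ℕ)) : List ℕ := T.reverse.flatten

def fillAux : List ℕ → List ℕ → List (List ℕ)
  | [], _ => []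
  | a :: rest, w => w.take a :: fillAux rest (w.drop a)

/-- Fill a shape (row lengths, bottom row first) with a word read in row reading order. -/
def fillTab (sh : List ℕ) (w : List ℕ) : List (List ℕ) := (fillAux sh.reverse w).reverse

/-- `T` is a standard Young tableau of partition shape (rows listed bottom first). -/
def IsSYT (T : List (List ℕ)) : Prop :=
  (T.map List.length).Pairwise (· ≥ ·) ∧ (∀ r ∈ T, r ≠ []) ∧
  (rwTab T).Perm (List.range' 1 (rwTab T).length) ∧
  (∀ r ∈ T, r.Pairwise (· < ·)) ∧
  ∀ k, k + 1 < T.length → ∀ j < (T.getD (k + 1) []).length,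
    (T.getD k []).getD j 0 < (T.getD (k + 1) []).getD j 0

/-- An elementary dual equivalence move on tableaux, via the row reading word. -/
def DEMove (T T' : List (List ℕ)) : Prop :=
  ∃ i, 1 < i ∧ i < (rwTab T).length ∧
    T' = fillTab (T.map List.length) (delem i (rwTab T))

/-- Dual equivalence of tableaux: the equivalence relation generated by the moves `d_i`. -/
def DualEquiv : List (List ℕ) → List (List ℕ) → Prop := Relation.EqvGen DEMove

/-- Row reading order on cells `(x, y)` of `ℤ × ℤ` (top rows first, left to right). -/
def ReadingOrder (c d : ℤ × ℤ) : Prop := d.2 < c.2 ∨ (c.2 = d.2 ∧ c.1 < d.1)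

/-- A diagram, presented as its list of cells in row reading order. -/
def IsDiagramList (δ : List (ℤ × ℤ)) : Prop := δ.Pairwise ReadingOrder

def leRO (c d : ℤ × ℤ) : Prop := c = d ∨ ReadingOrder c d

/-- `e` lies in the pistol of the cell `c`: between `c` and the position one row below `c`. -/
def InPistol (c e : ℤ × ℤ) : Prop := leRO c e ∧ leRO e (c.1, c.2 - 1)

/-- A set of indices (into the row reading order of `δ`) lies in a common pistol of `δ`. -/
def Pistoled (δ : List (ℤ × ℤ)) (S : List ℕ) : Prop :=
  ∃ c ∈ δ, ∀ i ∈ S, i < δ.length ∧ InPistol c (δ.getD i (0, 0))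

/-- The involution `D_i^δ` of Assaf. -/
noncomputable def Ddelta (δ : List (ℤ × ℤ)) (i : ℕ) (π : List ℕ) : List ℕ :=
  if Pistoled δ [π.idxOf (i - 1), π.idxOf i, π.idxOf (i + 1)] then dtil i π
  else delem i π

/-- The cell at index `j` of the filling `T_δ(w)` is a descent. -/
def IsDescentAt (δ : List (ℤ × ℤ)) (w : List ℕ) (j : ℕ) : Prop :=
  j < δ.length ∧ ∃ k < δ.length,
    δ.getD k (0, 0) = ((δ.getD j (0, 0)).1, (δ.getD j (0, 0)).2 - 1) ∧
    w.getD k 0 < w.getD j 0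

/-- The set of descent cells of the filling `T_δ(w)`. -/
def DesSet (δ : List (ℤ × ℤ)) (w : List ℕ) : Set (ℤ × ℤ) :=
  {c | ∃ j, j < δ.length ∧ δ.getD j (0, 0) = c ∧ IsDescentAt δ w j}

/-- Number of cells of `δ` strictly above `c` in its column. -/
def legOf (δ : List (ℤ × ℤ)) (c : ℤ × ℤ) : ℕ :=
  (δ.filter fun e => e.1 = c.1 ∧ c.2 < e.2).length

/-- The major index statistic `maj_δ`. -/
noncomputable def majD (δ : List (ℤ × ℤ)) (w : List ℕ) : ℕ :=
  ∑ j ∈ Finset.range δ.length,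
    if IsDescentAt δ w j then 1 + legOf δ (δ.getD j (0, 0)) else 0

/-- Indices `j < k` form an inversion triple of `T_δ(w)` (with the cell below `j`). -/
def InvTripleAt (δ : List (ℤ × ℤ)) (w : List ℕ) (j k : ℕ) : Prop :=
  j < k ∧ k < δ.length ∧
  (δ.getD j (0, 0)).2 = (δ.getD k (0, 0)).2 ∧
  ∃ m < δ.length, δ.getD m (0, 0) = ((δ.getD j (0, 0)).1, (δ.getD j (0, 0)).2 - 1) ∧
    ((w.getD m 0 < w.getD k 0 ∧ w.getD k 0 < w.getD j 0) ∨
     (w.getD j 0 ≤ w.getD m 0 ∧ w.getD m 0 < w.getD k 0) ∨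
     (w.getD k 0 < w.getD j 0 ∧ w.getD j 0 ≤ w.getD m 0))

/-- Inversion pair where the cell below the left cell is missing. -/
def InvPairBelowAt (δ : List (ℤ × ℤ)) (w : List ℕ) (j k : ℕ) : Prop :=
  j < k ∧ k < δ.length ∧
  (δ.getD j (0, 0)).2 = (δ.getD k (0, 0)).2 ∧
  ((δ.getD j (0, 0)).1, (δ.getD j (0, 0)).2 - 1) ∉ δ ∧
  w.getD k 0 < w.getD j 0

/-- Inversion pair where the upper-left cell of the triple is missing. -/
def InvPairAboveAt (δ : List (ℤ × ℤ)) (w : List ℕ) (k m : ℕ) : Prop :=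
  k < δ.length ∧ m < δ.length ∧
  (δ.getD k (0, 0)).2 = (δ.getD m (0, 0)).2 + 1 ∧
  (δ.getD m (0, 0)).1 < (δ.getD k (0, 0)).1 ∧
  ((δ.getD m (0, 0)).1, (δ.getD m (0, 0)).2 + 1) ∉ δ ∧
  w.getD m 0 < w.getD k 0

/-- The inversion statistic `inv_δ(w)`: inversion triples plus inversion pairs. -/
noncomputable def invD (δ : List (ℤ × ℤ)) (w : List ℕ) : ℕ :=
  ((Finset.range δ.length ×ˢ Finset.range δ.length).filter fun p =>
      InvTripleAt δ w p.1 p.2).card +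
  ((Finset.range δ.length ×ˢ Finset.range δ.length).filter fun p =>
      InvPairBelowAt δ w p.1 p.2).card +
  ((Finset.range δ.length ×ˢ Finset.range δ.length).filter fun p =>
      InvPairAboveAt δ w p.1 p.2).card

/-- The cells of the (French) partition diagram of `lam`, in row reading order. -/
def partitionDiagram (lam : List ℕ) : List (ℤ × ℤ) :=
  ((List.range lam.length).reverse.map fun r =>
    (List.range (lam.getD r 0)).map fun x => ((x : ℤ), (r : ℤ))).flatten

/-- Index (in `w`) of the `j`-th from last occurrence of the value `v` (`j ≥ 1`). -/
def posFromLast (w : List ℕ) (v j : ℕ) : ℕ :=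
  (((List.range w.length).filter fun p => w.getD p 0 = v).reverse).getD (j - 1) 0

/-- A Yamanouchi word `w` jams the diagram `δ`. -/
def Jams (δ : List (ℤ × ℤ)) (w : List ℕ) : Prop :=
  ∃ i j : ℕ, 1 ≤ i ∧ 1 ≤ j ∧ j ≤ w.count i ∧ j + 1 ≤ w.count (i + 1) ∧
    Pistoled δ [posFromLast w i j, posFromLast w (i + 1) (j + 1)]

/-- `p` occurs as a strict pattern of `π` at the (increasing) index list `idx`. -/
def StrictPatternAt (p : List ℕ) (π : List ℕ) (idx : List ℕ) : Prop :=
  idx.Pairwise (· < ·) ∧ (∀ i ∈ idx, i < π.length) ∧ idx.length = p.length ∧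
  ∃ k : ℕ, ∀ j < p.length, π.getD (idx.getD j 0) 0 = p.getD j 0 + k

/-- `γ` is a realizable descent set of `δ`. -/
def RealizableIn (γ : Finset (ℤ × ℤ)) (δ : List (ℤ × ℤ)) : Prop :=
  (∀ c ∈ γ, ((c.1, c.2 - 1) : ℤ × ℤ) ∈ δ) ∧
  ∀ x₁ x₂ lo hi : ℤ, x₁ < x₂ → lo < hi →
    ((x₁, hi) : ℤ × ℤ) ∉ γ → ((x₁, lo) : ℤ × ℤ) ∉ γ →
    (∀ j, lo < j → j < hi → ((x₁, j) : ℤ × ℤ) ∈ γ) →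
    ¬ ∀ j, lo < j → j ≤ hi → ((x₂, j) : ℤ × ℤ) ∈ γ

/-- Value of the leading filling at a cell: `1` plus the length of the maximal run of
cells of `γ` weakly below `c` in its column, i.e. `1` off a non-`γ` cell, and one plus
the value below on cells of `γ`. -/
noncomputable def wval (γ : Finset (ℤ × ℤ)) (c : ℤ × ℤ) : ℕ :=
  1 + ((Finset.range γ.card).filter fun m =>
    ∀ l ≤ m, ((c.1, c.2 - (l : ℤ)) : ℤ × ℤ) ∈ γ).card

/-! ### Auxiliary lemmas -/

private def swf (a b : ℕ) (x : ℕ) : ℕ := if x = a then b else if x = b then a else x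
private def cyf (a b c : ℕ) (x : ℕ) : ℕ :=
  if x = a then b else if x = b then c else if x = c then a else x

private lemma swf_swf (a b x : ℕ) : swf a b (swf a b x) = x := by
  simp only [swf]; split_ifs <;> omega

private lemma cyf_cyf {a b c : ℕ} (hab : a ≠ b) (hbc : b ≠ c) (hac : a ≠ c) (x : ℕ) :
    cyf b a c (cyf a b c x) = x := by
  simp only [cyf]; split_ifs <;> omega

private lemma swf_inj (a b : ℕ) : Function.Injective (swf a b) :=
  Function.LeftInverse.injective (swf_swf a b)

private lemma cyf_inj {a b c : ℕ} (hab : a ≠ b) (hbc : b ≠ c) (hac : a ≠ c) :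
    Function.Injective (cyf a b c) :=
  Function.LeftInverse.injective (cyf_cyf hab hbc hac)

private lemma idxOf_map {f : ℕ → ℕ} (hf : Function.Injective f) (w : List ℕ) (a : ℕ) :
    (w.map f).idxOf (f a) = w.idxOf a := by
  induction w with
  | nil => rfl
  | cons x l ih =>
    by_cases h : x = a
    · subst h; simp
    · rw [List.map_cons, List.idxOf_cons_ne _ (fun hh => h (hf hh)),
        List.idxOf_cons_ne _ h, ih]

private lemma swapVals_eq (a b : ℕ) (w : List ℕ) : swapVals a b w = w.map (swf a b) := rfl

private lemma cycVals_eq (a b c : ℕ) (w : List ℕ) : cycVals a b c w = w.map (cyf a b c) := rfl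

private lemma swapVals_swapVals (a b : ℕ) (w : List ℕ) : swapVals a b (swapVals a b w) = w := by
  rw [swapVals_eq, swapVals_eq, List.map_map]
  conv_rhs => rw [← List.map_id w]
  exact List.map_congr_left fun x _ => swf_swf a b x

private lemma cycVals_cycVals {a b c : ℕ} (hab : a ≠ b) (hbc : b ≠ c) (hac : a ≠ c)
    (w : List ℕ) : cycVals b a c (cycVals a b c w) = w := by
  rw [cycVals_eq, cycVals_eq, List.map_map]
  conv_rhs => rw [← List.map_id w]
  exact List.map_congr_left fun x _ => cyf_cyf hab hbc hac x

private lemma swapVals_idxOf (a b : ℕ) (w : List ℕ) {u v : ℕ} (h : swf a b u = v) :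
    (swapVals a b w).idxOf v = w.idxOf u := by
  rw [swapVals_eq, ← h, idxOf_map (swf_inj a b)]

private lemma cycVals_idxOf {a b c : ℕ} (hab : a ≠ b) (hbc : b ≠ c) (hac : a ≠ c)
    (w : List ℕ) {u v : ℕ} (h : cyf a b c u = v) :
    (cycVals a b c w).idxOf v = w.idxOf u := by
  rw [cycVals_eq, ← h, idxOf_map (cyf_inj hab hbc hac)]

private lemma delem_eq (i : ℕ) (w : List ℕ) :
    delem i w =
      if (w.idxOf (i-1) < w.idxOf i ∧ w.idxOf i < w.idxOf (i+1)) ∨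
         (w.idxOf (i+1) < w.idxOf i ∧ w.idxOf i < w.idxOf (i-1)) then w
      else if (w.idxOf i < w.idxOf (i-1) ∧ w.idxOf (i-1) < w.idxOf (i+1)) ∨
              (w.idxOf (i+1) < w.idxOf (i-1) ∧ w.idxOf (i-1) < w.idxOf i) then
        swapVals i (i+1) w
      else swapVals i (i-1) w := rfl

private lemma dtil_eq (i : ℕ) (w : List ℕ) :
    dtil i w =
      if (w.idxOf (i-1) < w.idxOf i ∧ w.idxOf i < w.idxOf (i+1)) ∨
         (w.idxOf (i+1) < w.idxOf i ∧ w.idxOf i < w.idxOf (i-1)) then w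
      else if w.idxOf i < w.idxOf (i-1) ∧ w.idxOf i < w.idxOf (i+1) then
        (if w.idxOf (i-1) < w.idxOf (i+1) then cycVals i (i-1) (i+1) w
         else cycVals i (i+1) (i-1) w)
      else
        (if w.idxOf (i-1) < w.idxOf (i+1) then cycVals (i-1) i (i+1) w
         else cycVals (i+1) i (i-1) w) := rfl

private lemma pistoled_congr (δ : List (ℤ × ℤ)) {S T : List ℕ} (h : ∀ x, x ∈ S ↔ x ∈ T) :
    Pistoled δ S ↔ Pistoled δ T := by
  constructor
  · rintro ⟨c, hc, hall⟩; exact ⟨c, hc, fun i hi => hall i ((h i).mpr hi)⟩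
  · rintro ⟨c, hc, hall⟩; exact ⟨c, hc, fun i hi => hall i ((h i).mp hi)⟩

section main
variable {i : ℕ} {w : List ℕ}

private lemma delem_spec (h1 : 1 < i) (hm1 : i - 1 ∈ w) (h0 : i ∈ w) (hp1 : i + 1 ∈ w) :
    delem i (delem i w) = w ∧
    ∀ x, (x ∈ [(delem i w).idxOf (i-1), (delem i w).idxOf i, (delem i w).idxOf (i+1)] ↔
       x ∈ [w.idxOf (i-1), w.idxOf i, w.idxOf (i+1)]) := by
  have hd1 : i - 1 ≠ i := by omega
  have hd2 : i ≠ i + 1 := by omega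
  have hd3 : i - 1 ≠ i + 1 := by omega
  have hpq : w.idxOf (i-1) ≠ w.idxOf i := fun h => hd1 ((List.idxOf_inj hm1).1 h)
  have hqr : w.idxOf i ≠ w.idxOf (i+1) := fun h => hd2 ((List.idxOf_inj h0).1 h)
  have hpr : w.idxOf (i-1) ≠ w.idxOf (i+1) := fun h => hd3 ((List.idxOf_inj hm1).1 h)
  rw [delem_eq i w]
  split_ifs with hA hB
  · exact ⟨by rw [delem_eq i w, if_pos hA], fun x => Iff.rfl⟩
  · have e1 : (swapVals i (i+1) w).idxOf (i-1) = w.idxOf (i-1) :=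
      swapVals_idxOf _ _ _ (by simp only [swf]; split_ifs <;> omega)
    have e2 : (swapVals i (i+1) w).idxOf i = w.idxOf (i+1) :=
      swapVals_idxOf _ _ _ (by simp only [swf]; split_ifs <;> omega)
    have e3 : (swapVals i (i+1) w).idxOf (i+1) = w.idxOf i :=
      swapVals_idxOf _ _ _ (by simp only [swf]; split_ifs <;> omega)
    refine ⟨?_, ?_⟩
    · rw [delem_eq, e1, e2, e3]
      split_ifs <;> first
        | exact swapVals_swapVals _ _ _
        | (exfalso; omega)
    · intro x
      rw [e1, e2, e3]
      simp only [List.mem_cons, List.not_mem_nil]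
      constructor <;> rintro (h | h | h | h) <;>
        first
          | exact h.elim
          | exact Or.inl h
          | exact Or.inr (Or.inl h)
          | exact Or.inr (Or.inr (Or.inl h))
  · have e1 : (swapVals i (i-1) w).idxOf (i-1) = w.idxOf i :=
      swapVals_idxOf _ _ _ (by simp only [swf]; split_ifs <;> omega)
    have e2 : (swapVals i (i-1) w).idxOf i = w.idxOf (i-1) :=
      swapVals_idxOf _ _ _ (by simp only [swf]; split_ifs <;> omega)
    have e3 : (swapVals i (i-1) w).idxOf (i+1) = w.idxOf (i+1) :=
      swapVals_idxOf _ _ _ (by simp only [swf]; split_ifs <;> omega)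
    refine ⟨?_, ?_⟩
    · rw [delem_eq, e1, e2, e3]
      split_ifs <;> first
        | exact swapVals_swapVals _ _ _
        | (exfalso; omega)
    · intro x
      rw [e1, e2, e3]
      simp only [List.mem_cons, List.not_mem_nil]
      constructor <;> rintro (h | h | h | h) <;>
        first
          | exact h.elim
          | exact Or.inl h
          | exact Or.inr (Or.inl h)
          | exact Or.inr (Or.inr (Or.inl h))

private lemma dtil_spec (h1 : 1 < i) (hm1 : i - 1 ∈ w) (h0 : i ∈ w) (hp1 : i + 1 ∈ w) :
    dtil i (dtil i w) = w ∧
    ∀ x, (x ∈ [(dtil i w).idxOf (i-1), (dtil i w).idxOf i, (dtil i w).idxOf (i+1)] ↔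
       x ∈ [w.idxOf (i-1), w.idxOf i, w.idxOf (i+1)]) := by
  have hd1 : i - 1 ≠ i := by omega
  have hd2 : i ≠ i + 1 := by omega
  have hd3 : i - 1 ≠ i + 1 := by omega
  have hpq : w.idxOf (i-1) ≠ w.idxOf i := fun h => hd1 ((List.idxOf_inj hm1).1 h)
  have hqr : w.idxOf i ≠ w.idxOf (i+1) := fun h => hd2 ((List.idxOf_inj h0).1 h)
  have hpr : w.idxOf (i-1) ≠ w.idxOf (i+1) := fun h => hd3 ((List.idxOf_inj hm1).1 h)
  rw [dtil_eq i w]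
  split_ifs with hA hB hC hC
  · exact ⟨by rw [dtil_eq i w, if_pos hA], fun x => Iff.rfl⟩
  · -- q min, p < r : cycVals i (i-1) (i+1)
    have e1 : (cycVals i (i-1) (i+1) w).idxOf (i-1) = w.idxOf i :=
      cycVals_idxOf hd1.symm hd3 hd2 _ (by simp only [cyf]; split_ifs <;> omega)
    have e2 : (cycVals i (i-1) (i+1) w).idxOf i = w.idxOf (i+1) :=
      cycVals_idxOf hd1.symm hd3 hd2 _ (by simp only [cyf]; split_ifs <;> omega)
    have e3 : (cycVals i (i-1) (i+1) w).idxOf (i+1) = w.idxOf (i-1) :=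
      cycVals_idxOf hd1.symm hd3 hd2 _ (by simp only [cyf]; split_ifs <;> omega)
    refine ⟨?_, ?_⟩
    · rw [dtil_eq, e1, e2, e3]
      split_ifs <;> first
        | exact cycVals_cycVals hd1.symm hd3 hd2 w
        | exact cycVals_cycVals hd2 hd3.symm hd1.symm w
        | exact cycVals_cycVals hd1 hd2 hd3 w
        | exact cycVals_cycVals hd2.symm hd1.symm hd3.symm w
        | (exfalso; omega)
    · intro x
      rw [e1, e2, e3]
      simp only [List.mem_cons, List.not_mem_nil]
      constructor <;> rintro (h | h | h | h) <;>
        first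
          | exact h.elim
          | exact Or.inl h
          | exact Or.inr (Or.inl h)
          | exact Or.inr (Or.inr (Or.inl h))
  · -- q min, r < p : cycVals i (i+1) (i-1)
    have e1 : (cycVals i (i+1) (i-1) w).idxOf (i-1) = w.idxOf (i+1) :=
      cycVals_idxOf hd2 hd3.symm hd1.symm _ (by simp only [cyf]; split_ifs <;> omega)
    have e2 : (cycVals i (i+1) (i-1) w).idxOf i = w.idxOf (i-1) :=
      cycVals_idxOf hd2 hd3.symm hd1.symm _ (by simp only [cyf]; split_ifs <;> omega)
    have e3 : (cycVals i (i+1) (i-1) w).idxOf (i+1) = w.idxOf i :=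
      cycVals_idxOf hd2 hd3.symm hd1.symm _ (by simp only [cyf]; split_ifs <;> omega)
    refine ⟨?_, ?_⟩
    · rw [dtil_eq, e1, e2, e3]
      split_ifs <;> first
        | exact cycVals_cycVals hd1.symm hd3 hd2 w
        | exact cycVals_cycVals hd2 hd3.symm hd1.symm w
        | exact cycVals_cycVals hd1 hd2 hd3 w
        | exact cycVals_cycVals hd2.symm hd1.symm hd3.symm w
        | (exfalso; omega)
    · intro x
      rw [e1, e2, e3]
      simp only [List.mem_cons, List.not_mem_nil]
      constructor <;> rintro (h | h | h | h) <;>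
        first
          | exact h.elim
          | exact Or.inl h
          | exact Or.inr (Or.inl h)
          | exact Or.inr (Or.inr (Or.inl h))
  · -- q max, p < r : cycVals (i-1) i (i+1)
    have e1 : (cycVals (i-1) i (i+1) w).idxOf (i-1) = w.idxOf (i+1) :=
      cycVals_idxOf hd1 hd2 hd3 _ (by simp only [cyf]; split_ifs <;> omega)
    have e2 : (cycVals (i-1) i (i+1) w).idxOf i = w.idxOf (i-1) :=
      cycVals_idxOf hd1 hd2 hd3 _ (by simp only [cyf]; split_ifs <;> omega)
    have e3 : (cycVals (i-1) i (i+1) w).idxOf (i+1) = w.idxOf i :=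
      cycVals_idxOf hd1 hd2 hd3 _ (by simp only [cyf]; split_ifs <;> omega)
    refine ⟨?_, ?_⟩
    · rw [dtil_eq, e1, e2, e3]
      split_ifs <;> first
        | exact cycVals_cycVals hd1.symm hd3 hd2 w
        | exact cycVals_cycVals hd2 hd3.symm hd1.symm w
        | exact cycVals_cycVals hd1 hd2 hd3 w
        | exact cycVals_cycVals hd2.symm hd1.symm hd3.symm w
        | (exfalso; omega)
    · intro x
      rw [e1, e2, e3]
      simp only [List.mem_cons, List.not_mem_nil]
      constructor <;> rintro (h | h | h | h) <;>
        first
          | exact h.elim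
          | exact Or.inl h
          | exact Or.inr (Or.inl h)
          | exact Or.inr (Or.inr (Or.inl h))
  · -- q max, r < p : cycVals (i+1) i (i-1)
    have e1 : (cycVals (i+1) i (i-1) w).idxOf (i-1) = w.idxOf i :=
      cycVals_idxOf hd2.symm hd1.symm hd3.symm _ (by simp only [cyf]; split_ifs <;> omega)
    have e2 : (cycVals (i+1) i (i-1) w).idxOf i = w.idxOf (i+1) :=
      cycVals_idxOf hd2.symm hd1.symm hd3.symm _ (by simp only [cyf]; split_ifs <;> omega)
    have e3 : (cycVals (i+1) i (i-1) w).idxOf (i+1) = w.idxOf (i-1) :=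
      cycVals_idxOf hd2.symm hd1.symm hd3.symm _ (by simp only [cyf]; split_ifs <;> omega)
    refine ⟨?_, ?_⟩
    · rw [dtil_eq, e1, e2, e3]
      split_ifs <;> first
        | exact cycVals_cycVals hd1.symm hd3 hd2 w
        | exact cycVals_cycVals hd2 hd3.symm hd1.symm w
        | exact cycVals_cycVals hd1 hd2 hd3 w
        | exact cycVals_cycVals hd2.symm hd1.symm hd3.symm w
        | (exfalso; omega)
    · intro x
      rw [e1, e2, e3]
      simp only [List.mem_cons, List.not_mem_nil]
      constructor <;> rintro (h | h | h | h) <;>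
        first
          | exact h.elim
          | exact Or.inl h
          | exact Or.inr (Or.inl h)
          | exact Or.inr (Or.inr (Or.inl h))

end main

-- STATEMENT 9
theorem Ddelta_involutive (δ : List (ℤ × ℤ)) (hδ : IsDiagramList δ) (i : ℕ)
    (π : List ℕ) (hπ : π.Perm (List.range' 1 δ.length))
    (h1 : 1 < i) (h2 : i < δ.length) :
    Ddelta δ i (Ddelta δ i π) = π := by
  have hm1 : i - 1 ∈ π := hπ.mem_iff.2 (by rw [List.mem_range'_1]; omega)
  have h0 : i ∈ π := hπ.mem_iff.2 (by rw [List.mem_range'_1]; omega)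
  have hp1 : i + 1 ∈ π := hπ.mem_iff.2 (by rw [List.mem_range'_1]; omega)
  by_cases hP : Pistoled δ [π.idxOf (i - 1), π.idxOf i, π.idxOf (i + 1)]
  · have hd := dtil_spec h1 hm1 h0 hp1
    have e : Ddelta δ i π = dtil i π := by unfold Ddelta; rw [if_pos hP]
    rw [e]
    unfold Ddelta
    rw [if_pos ((pistoled_congr δ hd.2).2 hP), hd.1]
  · have hd := delem_spec h1 hm1 h0 hp1
    have e : Ddelta δ i π = delem i π := by unfold Ddelta; rw [if_neg hP]
    rw [e]
    unfold Ddelta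
    rw [if_neg (fun h => hP ((pistoled_congr δ hd.2).1 h)), hd.1]
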